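/- arXiv:2006.05534 — 2 statements merged into one kernel-verified Lean document; each statement's English description precedes it below -/
import Mathlib

section
/- Fix ε > 0, 1/2 < η < 1, and let Σ ∈ ℝ^{K×K} be positive definite and μ_0 ∈ ℝ^K. Every minimizer (μ_1, μ_2) of the problem minimize η(μ_1−μ_0)ᵀΣ^{−1}(μ_1−μ_0) + (1−η)(μ_2−μ_0)ᵀΣ^{−1}(μ_2−μ_0) subject to ‖μ_1 − μ_2‖₂ = ε satisfies μ_0 = η μ_1 + (1−η) μ_2. -/
/-- Every minimizer of the weighted Mahalanobis objective subject to ‖μ1−μ2‖ = ε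
satisfies μ0 = η μ1 + (1−η) μ2. -/
theorem kl_common_cov_minimizer {K : ℕ} (ε η : ℝ) (hε : 0 < ε)
    (hη : 1/2 < η) (hη1 : η < 1)
    {S : Matrix (Fin K) (Fin K) ℝ} (hS : S.PosDef)
    (μ0 μ1 μ2 : EuclideanSpace ℝ (Fin K))
    (hcon : ‖μ1 - μ2‖ = ε)
    (hmin : ∀ ν1 ν2 : EuclideanSpace ℝ (Fin K), ‖ν1 - ν2‖ = ε →
      η * inner (𝕜 := ℝ) (μ1 - μ0) (Matrix.toEuclideanLin S⁻¹ (μ1 - μ0))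
        + (1 - η) * inner (𝕜 := ℝ) (μ2 - μ0) (Matrix.toEuclideanLin S⁻¹ (μ2 - μ0))
      ≤ η * inner (𝕜 := ℝ) (ν1 - μ0) (Matrix.toEuclideanLin S⁻¹ (ν1 - μ0))
        + (1 - η) * inner (𝕜 := ℝ) (ν2 - μ0) (Matrix.toEuclideanLin S⁻¹ (ν2 - μ0))) :
    μ0 = η • μ1 + (1 - η) • μ2 := by
  set A : EuclideanSpace ℝ (Fin K) →ₗ[ℝ] EuclideanSpace ℝ (Fin K) :=
    Matrix.toEuclideanLin S⁻¹ with hA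
  have hinv : (S⁻¹).PosDef := hS.inv
  have hsym : LinearMap.IsSymmetric A :=
    Matrix.isHermitian_iff_isSymmetric.mp hinv.isHermitian
  set x1 : EuclideanSpace ℝ (Fin K) := μ1 - μ0 with hx1
  set x2 : EuclideanSpace ℝ (Fin K) := μ2 - μ0 with hx2
  set w : EuclideanSpace ℝ (Fin K) := η • x1 + (1 - η) • x2 with hw
  -- expansion lemma
  have expand : ∀ x : EuclideanSpace ℝ (Fin K),
      inner (𝕜 := ℝ) (x - w) (A (x - w))
        = inner (𝕜 := ℝ) x (A x) - 2 * inner (𝕜 := ℝ) w (A x)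
          + inner (𝕜 := ℝ) w (A w) := by
    intro x
    have h1 : A (x - w) = A x - A w := map_sub _ _ _
    have h2 : inner (𝕜 := ℝ) x (A w) = inner (𝕜 := ℝ) w (A x) := by
      rw [← hsym w x, real_inner_comm]
    rw [h1, inner_sub_left, inner_sub_right, inner_sub_right, h2]
    ring
  -- linear combination identity
  have hcomb : η * inner (𝕜 := ℝ) w (A x1) + (1 - η) * inner (𝕜 := ℝ) w (A x2)
      = inner (𝕜 := ℝ) w (A w) := by
    have : A w = η • A x1 + (1 - η) • A x2 := by
      rw [hw, map_add, map_smul, map_smul]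
    rw [this, inner_add_right, real_inner_smul_right, real_inner_smul_right]
  -- apply minimality with translated points
  have hkey := hmin (μ1 - w) (μ2 - w) (by rw [show (μ1 - w) - (μ2 - w) = μ1 - μ2 by abel]; exact hcon)
  have e1 : μ1 - w - μ0 = x1 - w := by rw [hx1]; abel
  have e2 : μ2 - w - μ0 = x2 - w := by rw [hx2]; abel
  rw [e1, e2, expand x1, expand x2] at hkey
  set c : ℝ := inner (𝕜 := ℝ) w (A w) with hc
  have hc_le : c ≤ 0 := by nlinarith [hkey, hcomb]
  have hw0 : w = 0 := by
    by_contra hne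
    have hx : (WithLp.equiv 2 (Fin K → ℝ)) w ≠ 0 := by
      simpa using hne
    have hpos := hinv.dotProduct_mulVec_pos hx
    have hceq : c = dotProduct (star ((WithLp.equiv 2 (Fin K → ℝ)) w))
        (Matrix.mulVec S⁻¹ ((WithLp.equiv 2 (Fin K → ℝ)) w)) := by
      rw [hc, EuclideanSpace.inner_eq_star_dotProduct, dotProduct_comm]
      congr 1
    rw [← hceq] at hpos
    linarith
  have hfinal : η • μ1 + (1 - η) • μ2 - μ0 = w := by
    rw [hw, hx1, hx2]
    module
  rw [hw0] at hfinal
  exact (sub_eq_zero.mp hfinal).symm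
end

section
/- Fix K > κ ≥ 1, ε > 0 and η with (K−κ+ε²)/(K−κ+2ε²) < η < 1, and set u* = ((K−κ)(1−η)/(ε²(2η−1)))^{1/3}. Define f(u) = (K−κ)((1−η)|u−1|/|u| + η)² + ε²(η|u| + (1−η)|u−1|)² for u ≠ 0. Then f attains its global minimum over ℝ \ {0} at u = u*, and f(u*) = (((K−κ)(1−η)(2η−1)²/ε²)^{1/3} + (1−η))² ((K−κ)^{1/3}(ε²(2η−1)/(1−η))^{2/3} + ε²). -/
private lemma cube_root_eq' {x y : ℝ} (hx : 0 < x) (h : x^3 = y) :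
    y ^ ((1:ℝ)/3) = x := by
  subst h
  rw [← Real.rpow_natCast x 3, ← Real.rpow_mul hx.le]
  norm_num

set_option maxHeartbeats 1000000 in
/-- The function f attains its global minimum over ℝ \ {0} at u*, with the stated value. -/
theorem f_global_min (K κ : ℕ) (hκ : 1 ≤ κ) (hK : κ < K)
    (ε η : ℝ) (hε : 0 < ε)
    (hηlow : ((K:ℝ) - κ + ε^2) / ((K:ℝ) - κ + 2*ε^2) < η) (hη1 : η < 1) :
    (∀ u : ℝ, u ≠ 0 →
      ((K:ℝ) - κ) * ((1 - η) * |(((K:ℝ) - κ) * (1 - η) / (ε^2 * (2*η - 1))) ^ ((1:ℝ)/3) - 1|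
            / |(((K:ℝ) - κ) * (1 - η) / (ε^2 * (2*η - 1))) ^ ((1:ℝ)/3)| + η)^2
        + ε^2 * (η * |(((K:ℝ) - κ) * (1 - η) / (ε^2 * (2*η - 1))) ^ ((1:ℝ)/3)|
            + (1 - η) * |(((K:ℝ) - κ) * (1 - η) / (ε^2 * (2*η - 1))) ^ ((1:ℝ)/3) - 1|)^2
      ≤ ((K:ℝ) - κ) * ((1 - η) * |u - 1| / |u| + η)^2
        + ε^2 * (η * |u| + (1 - η) * |u - 1|)^2) ∧
    ((K:ℝ) - κ) * ((1 - η) * |(((K:ℝ) - κ) * (1 - η) / (ε^2 * (2*η - 1))) ^ ((1:ℝ)/3) - 1|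
          / |(((K:ℝ) - κ) * (1 - η) / (ε^2 * (2*η - 1))) ^ ((1:ℝ)/3)| + η)^2
      + ε^2 * (η * |(((K:ℝ) - κ) * (1 - η) / (ε^2 * (2*η - 1))) ^ ((1:ℝ)/3)|
          + (1 - η) * |(((K:ℝ) - κ) * (1 - η) / (ε^2 * (2*η - 1))) ^ ((1:ℝ)/3) - 1|)^2
    = (((((K:ℝ) - κ) * (1 - η) * (2*η - 1)^2 / ε^2) ^ ((1:ℝ)/3)) + (1 - η))^2
        * (((K:ℝ) - κ) ^ ((1:ℝ)/3) * (ε^2 * (2*η - 1) / (1 - η)) ^ ((2:ℝ)/3) + ε^2) := by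
  have hKκ : (κ:ℝ) + 1 ≤ (K:ℝ) := by exact_mod_cast hK
  have ha0 : (0:ℝ) < (K:ℝ) - κ := by linarith
  have hb : (0:ℝ) < 1 - η := by linarith
  have hε2 : (0:ℝ) < ε^2 := by positivity
  have hd : (0:ℝ) < (K:ℝ) - κ + 2*ε^2 := by linarith
  have hlow' : (K:ℝ) - κ + ε^2 < η * ((K:ℝ) - κ + 2*ε^2) := by
    have := (div_lt_iff₀ hd).mp hηlow
    linarith
  have hc : (0:ℝ) < 2*η - 1 := by nlinarith
  have habc : ((K:ℝ) - κ) * (1 - η) < ε^2 * (2*η - 1) := by nlinarith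
  set a : ℝ := (K:ℝ) - κ with hadef
  set b : ℝ := 1 - η with hbdef
  set c : ℝ := 2*η - 1 with hcdef
  have hbase : 0 < a * b / (ε^2 * c) := by positivity
  set θ : ℝ := (a * b / (ε^2 * c)) ^ ((1:ℝ)/3) with hθdef
  have hθ : 0 < θ := Real.rpow_pos_of_pos hbase _
  have hθ3 : θ^3 = a * b / (ε^2 * c) := by
    rw [hθdef, ← Real.rpow_natCast _ 3, ← Real.rpow_mul hbase.le]
    norm_num
  have hab : a * b = ε^2 * c * θ^3 := by
    rw [hθ3]; field_simp
  have hθ1 : θ < 1 := by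
    rw [hθdef]
    apply Real.rpow_lt_one hbase.le _ (by norm_num)
    rw [div_lt_one (by positivity)]
    linarith
  have hθabs : |θ| = θ := abs_of_pos hθ
  have hθ1abs : |θ - 1| = 1 - θ := by rw [abs_of_neg (by linarith)]; ring
  -- value of f at θ
  have hfθ : a * (b * |θ - 1| / |θ| + η)^2 + ε^2 * (η * |θ| + b * |θ - 1|)^2
      = (c*θ + b)^2 * (a + ε^2*θ^2) / θ^2 := by
    rw [hθabs, hθ1abs, hbdef, hcdef]
    field_simp
    ring
  -- key inequality
  have key : ∀ t : ℝ, 0 < t →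
      (c*θ + b)^2 * (a + ε^2*θ^2) * t^2 ≤ (c*t + b)^2 * (a + ε^2*t^2) * θ^2 := by
    intro t ht
    have hid : (c*t + b)^2 * (a + ε^2*t^2) * θ^2 - (c*θ + b)^2 * (a + ε^2*θ^2) * t^2
        = ε^2*c*θ^2*(t - θ)^2*(c*t^2 + 2*(b + c*θ)*t + b*θ) := by
      linear_combination ((θ - t)*(2*c*t*θ + b*θ + b*t)) * hab
    have hq : 0 ≤ c*t^2 + 2*(b + c*θ)*t + b*θ := by
      have q1 : 0 ≤ c*t^2 := mul_nonneg hc.le (sq_nonneg t)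
      have q2 : 0 ≤ 2*(b + c*θ)*t :=
        mul_nonneg (by linarith [mul_pos hc hθ]) ht.le
      have q3 : 0 ≤ b*θ := mul_nonneg hb.le hθ.le
      linarith
    have h1 : 0 ≤ ε^2*c*θ^2*(t - θ)^2*(c*t^2 + 2*(b + c*θ)*t + b*θ) :=
      mul_nonneg (mul_nonneg (mul_nonneg (mul_nonneg hε2.le hc.le) (sq_nonneg θ))
        (sq_nonneg (t - θ))) hq
    linarith
  constructor
  · intro u hu
    rw [hfθ]
    have ht : 0 < |u| := abs_pos.mpr hu
    have htri : 1 - |u| ≤ |u - 1| := by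
      have h := abs_sub_abs_le_abs_sub (1:ℝ) u
      rw [abs_one, abs_sub_comm] at h
      exact h
    have hst : c*|u| + b ≤ η*|u| + b*|u - 1| := by
      have h2 : b*(1 - |u|) ≤ b*|u - 1| := mul_le_mul_of_nonneg_left htri hb.le
      have h3 : c*|u| + b = η*|u| + b*(1 - |u|) := by rw [hbdef, hcdef]; ring
      linarith
    have hcu : 0 < c*|u| + b := by nlinarith [mul_nonneg hc.le (abs_nonneg u)]
    have hsu : (b * |u - 1| / |u| + η) * |u| = η*|u| + b*|u - 1| := by
      field_simp; ring
    have hs : (c*|u| + b)/|u| ≤ b * |u - 1| / |u| + η := by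
      rw [div_le_iff₀ ht, hsu]
      exact hst
    have hspos : 0 < b * |u - 1| / |u| + η :=
      lt_of_lt_of_le (div_pos hcu ht) hs
    have step1 : (c*θ + b)^2 * (a + ε^2*θ^2) / θ^2
        ≤ (c*|u| + b)^2 * (a + ε^2*|u|^2) / |u|^2 := by
      rw [div_le_div_iff₀ (by positivity) (by positivity)]
      exact key (|u|) ht
    have step2 : (c*|u| + b)^2 * (a + ε^2*|u|^2) / |u|^2
        ≤ (b * |u - 1| / |u| + η)^2 * (a + ε^2*|u|^2) := by
      have h2 : ((c*|u| + b)/|u|)^2 ≤ (b * |u - 1| / |u| + η)^2 := by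
        apply pow_le_pow_left₀ (le_of_lt (div_pos hcu ht)) hs
      calc (c*|u| + b)^2 * (a + ε^2*|u|^2) / |u|^2
          = ((c*|u| + b)/|u|)^2 * (a + ε^2*|u|^2) := by rw [div_pow]; ring
        _ ≤ (b * |u - 1| / |u| + η)^2 * (a + ε^2*|u|^2) :=
            mul_le_mul_of_nonneg_right h2 (by positivity)
    have step3 : (b * |u - 1| / |u| + η)^2 * (a + ε^2*|u|^2)
        = a * (b * |u - 1| / |u| + η)^2 + ε^2 * (η*|u| + b*|u - 1|)^2 := by
      rw [← hsu]; ring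
    linarith
  · rw [hfθ]
    have h1 : (a * b * c^2 / ε^2) ^ ((1:ℝ)/3) = c*θ := by
      apply cube_root_eq' (by positivity)
      rw [mul_pow, hθ3]
      field_simp
    have hd0 : 0 < ε^2*c/b := by positivity
    have e1 : (ε^2*c/b) ^ ((2:ℝ)/3) = ((ε^2*c/b)^2) ^ ((1:ℝ)/3) := by
      rw [← Real.rpow_natCast (ε^2*c/b) 2, ← Real.rpow_mul hd0.le]
      norm_num
    have e2 : a ^ ((1:ℝ)/3) * ((ε^2*c/b)^2) ^ ((1:ℝ)/3)
        = (a * (ε^2*c/b)^2) ^ ((1:ℝ)/3) := (Real.mul_rpow ha0.le (sq_nonneg _)).symm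
    have e3 : (a * (ε^2*c/b)^2) ^ ((1:ℝ)/3) = a / θ^2 := by
      apply cube_root_eq' (by positivity)
      field_simp
      linear_combination ((a*b + ε^2*c*θ^3)) * hab
    rw [h1, e1, e2, e3]
    field_simp
end
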